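/- Let $X$ and $Y$ be compact metric spaces and $\mathcal{F} = (g_1, \ldots, g_N)$ an $N$-tuple of continuous injective functions from $X$ to $Y$. Let $\hat{\mathcal{P}}$ be a partition of $[N] \times [2]$. Then the set $X^\Delta_{\hat{\mathcal{P}}}$ is a countable union of compact $\mathcal{F}$-coherent sets. -/

import Mathlib

/-- `evalAt g (x₁,x₂) (i,j) = g_i(x_j)`. -/
def evalAt {X Y : Type*} {N : ℕ} (g : Fin N → X → Y) (p : X × X)
    (a : Fin N × Fin 2) : Y :=
  g a.1 (if a.2 = 0 then p.1 else p.2)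

/-- The partition (setoid) of `[N] × [2]` induced by a pair `(x₁,x₂)`. -/
def inducedPartition {X Y : Type*} {N : ℕ} (g : Fin N → X → Y) (p : X × X) :
    Setoid (Fin N × Fin 2) :=
  Setoid.ker (evalAt g p)

/-- A subset `Z` of `X^Δ_{P̂}` is `𝓕`-coherent if indices in different blocks of `P̂`
have disjoint images over `Z`. -/
def FCoherent {X Y : Type*} {N : ℕ} (g : Fin N → X → Y) (P : Setoid (Fin N × Fin 2))
    (Z : Set (X × X)) : Prop :=
  ∀ a b : Fin N × Fin 2, ¬ P.r a b →
    Disjoint ((fun p => evalAt g p a) '' Z) ((fun p => evalAt g p b) '' Z)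

theorem stmt10 {X Y : Type*} [MetricSpace X] [CompactSpace X]
    [MetricSpace Y] [CompactSpace Y] (N : ℕ) (g : Fin N → C(X, Y))
    (hginj : ∀ i, Function.Injective (g i))
    (P : Setoid (Fin N × Fin 2)) :
    ∃ Z : ℕ → Set (X × X),
      (∀ n, IsCompact (Z n)) ∧
      (∀ n, Z n ⊆ {p : X × X | p.1 ≠ p.2 ∧
        inducedPartition (fun i => (g i : X → Y)) p = P}) ∧
      (∀ n, FCoherent (fun i => (g i : X → Y)) P (Z n)) ∧
      (⋃ n, Z n) = {p : X × X | p.1 ≠ p.2 ∧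
        inducedPartition (fun i => (g i : X → Y)) p = P} := by
  classical
  set g' : Fin N → X → Y := fun i => (g i : X → Y) with hg'
  set S : Set (X × X) := {p : X × X | p.1 ≠ p.2 ∧ inducedPartition g' p = P} with hSdef
  rcases isEmpty_or_nonempty X with hX | hX
  · refine ⟨fun _ => ∅, fun _ => isCompact_empty, fun _ => Set.empty_subset _, ?_, ?_⟩
    · intro n a b _; simp
    · have : S = ∅ := Set.eq_empty_of_isEmpty S
      simp [this]
  -- main case
  have hY : Nonempty (X × X) := inferInstance
  set F : X × X → (Fin N × Fin 2) → Y := fun p a => evalAt g' p a with hFdef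
  have hFcont : Continuous F := by
    apply continuous_pi
    intro a
    by_cases h : a.2 = 0
    · simpa [F, g', evalAt, h, Function.comp_def] using (g a.1).continuous.comp continuous_fst
    · simpa [F, g', evalAt, h, Function.comp_def] using (g a.1).continuous.comp continuous_snd
  have hFuc := CompactSpace.uniformContinuous_of_continuous hFcont
  have hδ : ∀ n : ℕ, ∃ δ > 0, ∀ ⦃p q : X × X⦄, dist p q < δ →
      dist (F p) (F q) < 1 / (2 * ((n : ℝ) + 1)) := by
    intro n
    exact Metric.uniformContinuous_iff.mp hFuc _ (by positivity)
  choose δ hδpos hδ using hδ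
  -- basic closed sets
  set Z0 : ℕ → Set (X × X) := fun n =>
    {p | 1 / ((n : ℝ) + 1) ≤ dist p.1 p.2} ∩
    ⋂ q : (Fin N × Fin 2) × (Fin N × Fin 2),
      if P.r q.1 q.2 then {p | F p q.1 = F p q.2}
      else {p | 1 / ((n : ℝ) + 1) ≤ dist (F p q.1) (F p q.2)} with hZ0def
  have hmem : ∀ n (p : X × X), p ∈ Z0 n ↔
      (1 / ((n : ℝ) + 1) ≤ dist p.1 p.2 ∧ ∀ a b : Fin N × Fin 2,
        (P.r a b → F p a = F p b) ∧
        (¬ P.r a b → 1 / ((n : ℝ) + 1) ≤ dist (F p a) (F p b))) := by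
    intro n p
    simp only [hZ0def, Set.mem_inter_iff, Set.mem_iInter, Set.mem_setOf_eq]
    constructor
    · rintro ⟨h1, h2⟩
      refine ⟨h1, fun a b => ?_⟩
      have h3 := h2 (a, b)
      constructor
      · intro hr; simpa [if_pos hr] using h3
      · intro hr; simpa [if_neg hr] using h3
    · rintro ⟨h1, h2⟩
      refine ⟨h1, fun q => ?_⟩
      by_cases hr : P.r q.1 q.2
      · simpa [if_pos hr] using (h2 q.1 q.2).1 hr
      · simpa [if_neg hr] using (h2 q.1 q.2).2 hr
  have hZ0closed : ∀ n, IsClosed (Z0 n) := by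
    intro n
    apply IsClosed.inter
    · exact isClosed_le continuous_const continuous_dist
    · apply isClosed_iInter
      intro q
      split_ifs
      · exact isClosed_eq ((continuous_apply q.1).comp hFcont)
          ((continuous_apply q.2).comp hFcont)
      · exact isClosed_le continuous_const
          (((continuous_apply q.1).comp hFcont).dist ((continuous_apply q.2).comp hFcont))
  have hZ0S : ∀ n, Z0 n ⊆ S := by
    intro n p hp
    rw [hmem] at hp
    obtain ⟨h1, h2⟩ := hp
    have hpos : (0 : ℝ) < 1 / ((n : ℝ) + 1) := by positivity
    constructor
    · intro he
      rw [show p.1 = p.2 from he] at h1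
      simp at h1
      linarith
    · apply Setoid.ext
      intro a b
      constructor
      · intro hab
        by_contra hr
        have hge := (h2 a b).2 hr
        have heq : F p a = F p b := hab
        rw [heq, dist_self] at hge
        linarith
      · intro hr
        exact (h2 a b).1 hr
  have hSZ0 : ∀ p ∈ S, ∃ n, p ∈ Z0 n := by
    intro p hp
    obtain ⟨hne, hpart⟩ := hp
    have hrel : ∀ a b : Fin N × Fin 2, P.r a b ↔ F p a = F p b := by
      intro a b
      rw [← hpart]
      exact Iff.rfl
    set T : Finset ℝ := insert (dist p.1 p.2)
      (Finset.univ.image (fun q : (Fin N × Fin 2) × (Fin N × Fin 2) =>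
        if P.r q.1 q.2 then 1 else dist (F p q.1) (F p q.2))) with hT
    have hTne : T.Nonempty := ⟨_, Finset.mem_insert_self _ _⟩
    set ε := T.min' hTne with hε
    have hall : ∀ x ∈ T, 0 < x := by
      intro x hx
      rw [hT, Finset.mem_insert] at hx
      rcases hx with h | h
      · rw [h]; exact dist_pos.mpr hne
      · obtain ⟨q, _, hq⟩ := Finset.mem_image.mp h
        rw [← hq]
        split_ifs with hr
        · norm_num
        · exact dist_pos.mpr (fun he => hr ((hrel q.1 q.2).mpr he))
    have hεpos : 0 < ε := hall _ (T.min'_mem hTne)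
    obtain ⟨n, hn⟩ := exists_nat_one_div_lt hεpos
    refine ⟨n, (hmem n p).mpr ⟨?_, ?_⟩⟩
    · have : dist p.1 p.2 ∈ T := Finset.mem_insert_self _ _
      have := T.min'_le _ this
      linarith
    · intro a b
      refine ⟨fun hr => (hrel a b).mp hr, fun hr => ?_⟩
      have hmemT : dist (F p a) (F p b) ∈ T := by
        rw [hT]
        apply Finset.mem_insert_of_mem
        apply Finset.mem_image.mpr
        exact ⟨(a, b), Finset.mem_univ _, by simp [if_neg hr]⟩
      have := T.min'_le _ hmemT
      linarith
  -- dense sequence in X × X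
  set u : ℕ → X × X := TopologicalSpace.denseSeq (X × X) with hu
  have hud : DenseRange u := TopologicalSpace.denseRange_denseSeq (X × X)
  set Z : ℕ → Set (X × X) := fun k =>
    Z0 (Nat.unpair k).1 ∩ Metric.closedBall (u (Nat.unpair k).2) (δ (Nat.unpair k).1 / 3)
    with hZdef
  have hZsub : ∀ k, Z k ⊆ S := fun k => (Set.inter_subset_left).trans (hZ0S _)
  refine ⟨Z, ?_, hZsub, ?_, ?_⟩
  · intro k
    exact ((hZ0closed _).inter Metric.isClosed_closedBall).isCompact
  · -- coherence
    intro k a b hab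
    rw [Set.disjoint_left]
    rintro y ⟨p, hp, hpy⟩ ⟨q, hq, hqy⟩
    set n := (Nat.unpair k).1
    obtain ⟨hp0, hpball⟩ := hp
    obtain ⟨hq0, hqball⟩ := hq
    have hdpq : dist p q < δ n := by
      have h1 := Metric.mem_closedBall.mp hpball
      have h2 := Metric.mem_closedBall.mp hqball
      have := dist_triangle p (u (Nat.unpair k).2) q
      rw [dist_comm (u (Nat.unpair k).2) q] at this
      have hd := hδpos n
      linarith
    have hFpq : dist (F p) (F q) < 1 / (2 * ((n : ℝ) + 1)) := hδ n hdpq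
    have hb : dist (F p b) (F q b) ≤ dist (F p) (F q) := dist_le_pi_dist _ _ _
    have hlow : 1 / ((n : ℝ) + 1) ≤ dist (F p a) (F p b) :=
      (((hmem n p).mp hp0).2 a b).2 hab
    have heq : F p a = F q b := by
      have e1 : F p a = y := hpy
      have e2 : F q b = y := hqy
      exact e1.trans e2.symm
    have htri : dist (F p a) (F p b) ≤ dist (F p a) (F q b) + dist (F q b) (F p b) :=
      dist_triangle _ _ _
    have h0 : dist (F p a) (F q b) = 0 := by rw [heq, dist_self]
    have hcomm : dist (F q b) (F p b) = dist (F p b) (F q b) := dist_comm _ _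
    have hne0 : ((n : ℝ) + 1) ≠ 0 := by positivity
    have harith : (1 : ℝ) / (2 * ((n : ℝ) + 1)) * 2 = 1 / ((n : ℝ) + 1) := by
      field_simp
    have hpos2 : (0 : ℝ) < 1 / (2 * ((n : ℝ) + 1)) := by positivity
    linarith
  · apply Set.eq_of_subset_of_subset
    · exact Set.iUnion_subset hZsub
    · intro p hp
      obtain ⟨n, hn⟩ := hSZ0 p hp
      obtain ⟨m, hm⟩ := hud.exists_dist_lt p (by linarith [hδpos n] : (0:ℝ) < δ n / 3)
      refine Set.mem_iUnion.mpr ⟨Nat.pair n m, ?_⟩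
      rw [hZdef]
      simp only [Nat.unpair_pair]
      exact ⟨hn, Metric.mem_closedBall.mpr hm.le⟩
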